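/- Let p be an odd prime and write p − 1 = 2^r·d with d odd and r ≥ 1. The number of ordered pairs (α, γ) of nonzero elements of Z/pZ such that α is a quadratic residue and γ is a relative non-residue to α (i.e. f(γ) > f(α)) is exactly d²·(4^r − 1)/3. Equivalently, the probability that a uniformly random γ in (Z/pZ)* is a relative non-residue to a uniformly random quadratic residue α equals (2/3)·(1 − 1/2^(2r)). -/

import Mathlib

/-- `γ` is a *relative non-residue* to `α` (i.e. `f(γ) > f(α)`): either `f(α) = -1`
(that is, `α^d = 1`) while `f(γ) ≥ 0` (that is, `γ^d ≠ 1`), or there are f-values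
`s < t` with `α^(2^s d) = -1` and `γ^(2^t d) = -1`. -/
def IsRelativeNonResidue (p d : ℕ) (α γ : ZMod p) : Prop :=
  (α ^ d = 1 ∧ γ ^ d ≠ 1) ∨ ∃ s t : ℕ, s < t ∧ α ^ (2 ^ s * d) = -1 ∧ γ ^ (2 ^ t * d) = -1

open Finset Polynomial

section Aux

variable (p : ℕ) [Fact p.Prime]

theorem aux_card_pow_one (n : ℕ) (hn : 0 < n) (hdvd : n ∣ p - 1) :
    (Finset.univ.filter fun x : ZMod p => x ^ n = 1).card = n := by
  obtain ⟨g, hg⟩ := IsCyclic.exists_generator (α := (ZMod p)ˣ)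
  have hord : orderOf g = p - 1 := by
    rw [orderOf_eq_card_of_forall_mem_zpowers hg, Nat.card_eq_fintype_card,
      ZMod.card_units_eq_totient, Nat.totient_prime (Fact.out)]
  have hprim : IsPrimitiveRoot (g : ZMod p) (p - 1) := by
    have := IsPrimitiveRoot.orderOf g
    rw [hord] at this
    exact IsPrimitiveRoot.coe_units_iff.mpr this
  obtain ⟨m, hm⟩ := hdvd
  have hm0 : 0 < m := by
    have h2 := (Fact.out : p.Prime).two_le
    rcases Nat.eq_zero_or_pos m with h | h
    · subst h; simp at hm; omega
    · exact h
  have hprim' : IsPrimitiveRoot ((g : ZMod p) ^ m) n := by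
    refine hprim.pow ?_ ?_
    · have := (Fact.out : p.Prime).two_le; omega
    · rw [hm, Nat.mul_comm]
  have : (Finset.univ.filter fun x : ZMod p => x ^ n = 1) = nthRootsFinset n (1 : ZMod p) := by
    ext x
    simp [Polynomial.mem_nthRootsFinset hn (1 : ZMod p)]
  rw [this, hprim'.card_nthRootsFinset]

theorem aux_unique (hp2 : 2 < p) {d : ℕ} {x : ZMod p} {s t : ℕ}
    (hs : x ^ (2 ^ s * d) = -1) (ht : x ^ (2 ^ t * d) = -1) : s = t := by
  haveI : Fact (2 < p) := ⟨hp2⟩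
  have hne : (-1 : ZMod p) ≠ 1 := ZMod.neg_one_ne_one
  by_contra hne'
  wlog h : s < t generalizing s t
  · exact this ht hs (Ne.symm hne') (by omega)
  have h1 : x ^ (2 ^ t * d) = 1 := by
    have he : (2 : ℕ) ^ t * d = (2 ^ s * d) * 2 ^ (t - s) := by
      rw [mul_comm (2 ^ s * d), ← mul_assoc, ← pow_add]
      congr 2
      omega
    rw [he, pow_mul, hs]
    rcases Nat.exists_eq_succ_of_ne_zero (by omega : t - s ≠ 0) with ⟨k, hk⟩
    rw [hk]
    exact Even.neg_one_pow (Nat.even_pow.mpr ⟨even_two, Nat.succ_ne_zero k⟩)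
  rw [ht] at h1
  exact hne h1

theorem aux_exists (hp2 : 2 < p) {r d : ℕ} (hpd : p - 1 = 2 ^ r * d) {x : ZMod p}
    (hx : x ≠ 0) (hxd : x ^ d ≠ 1) : ∃ t, t < r ∧ x ^ (2 ^ t * d) = -1 := by
  have hroot : x ^ (2 ^ r * d) = 1 := by
    rw [← hpd]; exact ZMod.pow_card_sub_one_eq_one hx
  have hP : ∃ j, x ^ (2 ^ j * d) = 1 := ⟨r, hroot⟩
  classical
  let j := Nat.find hP
  have hj : x ^ (2 ^ j * d) = 1 := Nat.find_spec hP
  have hj0 : j ≠ 0 := by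
    intro h
    apply hxd
    have h' := hj
    rw [h] at h'
    simpa using h'
  have hjr : j ≤ r := Nat.find_le hroot
  have hlt : ¬ x ^ (2 ^ (j - 1) * d) = 1 := Nat.find_min hP (by omega)
  refine ⟨j - 1, by omega, ?_⟩
  have hsq : (x ^ (2 ^ (j - 1) * d)) ^ 2 = 1 := by
    rw [← pow_mul]
    have he : 2 ^ (j - 1) * d * 2 = 2 ^ j * d := by
      rw [mul_comm _ 2, ← mul_assoc, ← pow_succ']
      congr 2
      omega
    rw [he, hj]
  rcases sq_eq_one_iff.mp hsq with h | h
  · exact absurd h hlt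
  · exact h

end Aux

theorem sum_pow_twoZ (n : ℕ) : ∑ t ∈ Finset.range n, (2 : ℤ) ^ t = 2 ^ n - 1 := by
  induction n with
  | zero => simp
  | succ n ih => rw [Finset.sum_range_succ, ih]; ring

theorem key_sumZ (n : ℕ) :
    3 * (∑ t ∈ Finset.range (n + 1), (2 : ℤ) ^ t +
      ∑ s ∈ Finset.range n, (2 : ℤ) ^ s * ∑ t ∈ Finset.Ico (s + 1) (n + 1), (2 : ℤ) ^ t)
      = 4 ^ (n + 1) - 1 := by
  induction n with
  | zero => simp
  | succ n ih =>
    have hsplit : ∑ s ∈ Finset.range (n + 1),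
        (2 : ℤ) ^ s * ∑ t ∈ Finset.Ico (s + 1) (n + 2), (2 : ℤ) ^ t
        = ∑ s ∈ Finset.range n, (2 : ℤ) ^ s * ∑ t ∈ Finset.Ico (s + 1) (n + 1), (2 : ℤ) ^ t
          + (∑ s ∈ Finset.range n, (2 : ℤ) ^ s) * 2 ^ (n + 1) + 2 ^ n * 2 ^ (n + 1) := by
      rw [Finset.sum_range_succ (fun s =>
        (2 : ℤ) ^ s * ∑ t ∈ Finset.Ico (s + 1) (n + 2), (2 : ℤ) ^ t) n]
      have h1 : ∀ s ∈ Finset.range n,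
          (2 : ℤ) ^ s * ∑ t ∈ Finset.Ico (s + 1) (n + 2), (2 : ℤ) ^ t
          = (2 : ℤ) ^ s * ∑ t ∈ Finset.Ico (s + 1) (n + 1), (2 : ℤ) ^ t
            + 2 ^ s * 2 ^ (n + 1) := by
        intro s hs
        rw [Finset.sum_Ico_succ_top (by simp at hs; omega)]
        ring
      rw [Finset.sum_congr rfl h1, Finset.sum_add_distrib, ← Finset.sum_mul]
      have he : Finset.Ico (n + 1) (n + 2) = {n + 1} := by
        rw [show n + 2 = (n + 1) + 1 from rfl]
        ext y
        simp [Finset.mem_Ico]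
      rw [he, Finset.sum_singleton]
    rw [Finset.sum_range_succ (fun t => (2 : ℤ) ^ t) (n + 1), hsplit]
    simp only [sum_pow_twoZ] at ih ⊢
    have h4 : ∀ m : ℕ, (4 : ℤ) ^ m = 2 ^ m * 2 ^ m := by
      intro m
      rw [show (4 : ℤ) = 2 * 2 by norm_num, mul_pow]
    rw [h4 (n + 1 + 1)]; rw [h4 (n + 1)] at ih
    simp only [pow_succ] at ih ⊢
    linear_combination ih

/-- **Theorem 6 (Relative non-residues are easier to find than non-residues).**
Let `p` be an odd prime, `p - 1 = 2^r * d` with `d` odd and `r ≥ 1`. The number of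
ordered pairs `(α, γ)` of nonzero elements of `Z/pZ` with `α` a quadratic residue and
`γ` a relative non-residue to `α` is exactly `d² (4^r - 1) / 3`; equivalently, the
probability that a random `γ` is a relative non-residue to a random quadratic residue
`α` is `(2/3)(1 - 1/2^(2r))`. -/
theorem card_relative_nonresidue_pairs (p : ℕ) (hp : p.Prime) (hodd : Odd p)
    (r d : ℕ) (hr : 1 ≤ r) (hd : Odd d) (hpd : p - 1 = 2 ^ r * d) :
    Nat.card {q : ZMod p × ZMod p //
        q.1 ≠ 0 ∧ q.2 ≠ 0 ∧ q.1 ^ ((p - 1) / 2) = 1 ∧ IsRelativeNonResidue p d q.1 q.2}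
      = d ^ 2 * (4 ^ r - 1) / 3 ∧
    (Nat.card {q : ZMod p × ZMod p //
        q.1 ≠ 0 ∧ q.2 ≠ 0 ∧ q.1 ^ ((p - 1) / 2) = 1 ∧ IsRelativeNonResidue p d q.1 q.2} : ℚ)
        / ((((p : ℚ) - 1) / 2) * ((p : ℚ) - 1))
      = 2 / 3 * (1 - 1 / 2 ^ (2 * r)) := by
  classical
  haveI : Fact p.Prime := ⟨hp⟩
  have hp2 : 2 < p := by
    rcases hp.eq_two_or_odd with h | h
    · exfalso; rw [h] at hodd; exact (by norm_num : ¬ Odd 2) hodd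
    · have := hp.two_le; omega
  have hd0 : 0 < d := hd.pos
  have hne : (-1 : ZMod p) ≠ 1 := by
    haveI : Fact (2 < p) := ⟨hp2⟩; exact ZMod.neg_one_ne_one
  have hne0 : (-1 : ZMod p) ≠ 0 := neg_ne_zero.mpr one_ne_zero
  have hhalf : (p - 1) / 2 = 2 ^ (r - 1) * d := by
    have h2 : 2 ^ r * d = 2 * (2 ^ (r - 1) * d) := by
      rw [← mul_assoc, ← pow_succ']
      congr 2
      omega
    rw [hpd, h2, Nat.mul_div_cancel_left _ two_pos]
  set A : ℕ → Finset (ZMod p) := fun t => Finset.univ.filter fun x => x ^ (2 ^ t * d) = -1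
    with hA
  set B : Finset (ZMod p) := Finset.univ.filter fun x => x ^ d = 1 with hB
  have hsqstep : ∀ (x : ZMod p) (t : ℕ), x ^ (2 ^ (t + 1) * d) = (x ^ (2 ^ t * d)) ^ 2 := by
    intro x t
    rw [← pow_mul, show 2 ^ t * d * 2 = 2 ^ (t + 1) * d by ring]
  have hcardB : B.card = d := aux_card_pow_one p d hd0 ⟨2 ^ r, by rw [hpd]; ring⟩
  have hcardA : ∀ t < r, (A t).card = 2 ^ t * d := by
    intro t ht
    have hsub : (Finset.univ.filter fun x : ZMod p => x ^ (2 ^ t * d) = 1)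
        ⊆ (Finset.univ.filter fun x : ZMod p => x ^ (2 ^ (t + 1) * d) = 1) := by
      intro x hx
      simp only [Finset.mem_filter, Finset.mem_univ, true_and] at *
      rw [hsqstep, hx, one_pow]
    have hAeq : A t = (Finset.univ.filter fun x : ZMod p => x ^ (2 ^ (t + 1) * d) = 1)
        \ (Finset.univ.filter fun x : ZMod p => x ^ (2 ^ t * d) = 1) := by
      ext x
      simp only [hA, Finset.mem_filter, Finset.mem_sdiff, Finset.mem_univ, true_and]
      constructor
      · intro hx
        refine ⟨by rw [hsqstep, hx, neg_one_sq], by rw [hx]; exact fun h => hne h⟩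
      · rintro ⟨h1, h2⟩
        have hsq1 : (x ^ (2 ^ t * d)) ^ 2 = 1 := by rw [← hsqstep]; exact h1
        rcases sq_eq_one_iff.mp hsq1 with h | h
        · exact absurd h h2
        · exact h
    have hd1 : (2 : ℕ) ^ (t + 1) * d ∣ p - 1 :=
      ⟨2 ^ (r - (t + 1)), by
        rw [hpd, show 2 ^ (t + 1) * d * 2 ^ (r - (t + 1)) = 2 ^ (t + 1) * 2 ^ (r - (t + 1)) * d
          by ring, ← pow_add]
        congr 2
        omega⟩
    have hd2 : (2 : ℕ) ^ t * d ∣ p - 1 :=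
      ⟨2 ^ (r - t), by
        rw [hpd, show 2 ^ t * d * 2 ^ (r - t) = 2 ^ t * 2 ^ (r - t) * d by ring, ← pow_add]
        congr 2
        omega⟩
    rw [hAeq, Finset.card_sdiff_of_subset hsub, aux_card_pow_one p _ (by positivity) hd1,
      aux_card_pow_one p _ (by positivity) hd2]
    have h2 : (2 : ℕ) ^ (t + 1) * d = 2 * (2 ^ t * d) := by ring
    omega
  -- power collapse helpers
  have hstep : ∀ (x : ZMod p) (u v : ℕ), u ≤ v → x ^ (2 ^ u * d) = -1 →
      x ^ (2 ^ v * d) = (-1) ^ (2 ^ (v - u)) := by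
    intro x u v huv hx
    have he : 2 ^ v * d = 2 ^ u * d * 2 ^ (v - u) := by
      rw [show 2 ^ u * d * 2 ^ (v - u) = 2 ^ u * 2 ^ (v - u) * d by ring, ← pow_add]
      congr 2
      omega
    rw [he, pow_mul, hx]
  have hone : ∀ k : ℕ, k ≠ 0 → ((-1 : ZMod p)) ^ (2 ^ k) = 1 := by
    intro k hk
    exact Even.neg_one_pow (Nat.even_pow.mpr ⟨even_two, hk⟩)
  have hcol : ∀ (x : ZMod p) (u v : ℕ), u ≤ v → x ^ (2 ^ u * d) = 1 → x ^ (2 ^ v * d) = 1 := by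
    intro x u v huv hx
    have he : 2 ^ v * d = 2 ^ u * d * 2 ^ (v - u) := by
      rw [show 2 ^ u * d * 2 ^ (v - u) = 2 ^ u * 2 ^ (v - u) * d by ring, ← pow_add]
      congr 2
      omega
    rw [he, pow_mul, hx, one_pow]
  -- membership facts
  have hAne0 : ∀ t, ∀ x ∈ A t, x ≠ 0 := by
    intro t x hx h0
    simp only [hA, Finset.mem_filter, Finset.mem_univ, true_and] at hx
    rw [h0, zero_pow (by positivity)] at hx
    exact hne0 hx.symm
  have hAdne : ∀ t, ∀ x ∈ A t, x ^ d ≠ 1 := by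
    intro t x hx hxd
    simp only [hA, Finset.mem_filter, Finset.mem_univ, true_and] at hx
    rw [pow_mul' x (2 ^ t) d, hxd, one_pow] at hx
    exact hne hx.symm
  have hBA : ∀ x ∈ B, ∀ t, x ∉ A t := by
    intro x hx t hx2
    simp only [hB, Finset.mem_filter, Finset.mem_univ, true_and] at hx
    exact hAdne t x hx2 hx
  have hdisjA : ∀ s t : ℕ, s ≠ t → Disjoint (A s) (A t) := by
    intro s t hst
    rw [Finset.disjoint_left]
    intro x hxs hxt
    simp only [hA, Finset.mem_filter, Finset.mem_univ, true_and] at hxs hxt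
    exact hst (aux_unique p hp2 hxs hxt)
  set C : Finset (ZMod p) := (Finset.range r).biUnion A with hC
  set D : ℕ → Finset (ZMod p) := fun s => (Finset.Ico (s + 1) r).biUnion A with hD
  have hcardC : C.card = ∑ t ∈ Finset.range r, 2 ^ t * d := by
    rw [hC, Finset.card_biUnion (fun s hs t ht hst => hdisjA s t hst)]
    exact Finset.sum_congr rfl fun t ht => hcardA t (Finset.mem_range.mp ht)
  have hcardD : ∀ s, (D s).card = ∑ t ∈ Finset.Ico (s + 1) r, 2 ^ t * d := by
    intro s
    rw [hD]
    rw [Finset.card_biUnion (fun u hu v hv huv => hdisjA u v huv)]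
    exact Finset.sum_congr rfl fun t ht => hcardA t (Finset.mem_Ico.mp ht).2
  set P : ZMod p × ZMod p → Prop := fun q =>
    q.1 ≠ 0 ∧ q.2 ≠ 0 ∧ q.1 ^ ((p - 1) / 2) = 1 ∧ IsRelativeNonResidue p d q.1 q.2 with hP
  have hNat : Nat.card {q : ZMod p × ZMod p // P q} = (Finset.univ.filter P).card := by
    rw [Nat.card_eq_fintype_card]
    simp [Fintype.card_subtype]
  -- the partition
  have hSeq : Finset.univ.filter P =
      (B ×ˢ C) ∪ (Finset.range (r - 1)).biUnion (fun s => A s ×ˢ D s) := by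
    ext q
    obtain ⟨a, g⟩ := q
    simp only [hP, Finset.mem_filter, Finset.mem_univ, true_and, Finset.mem_union,
      Finset.mem_product, Finset.mem_biUnion, Finset.mem_range]
    constructor
    · rintro ⟨ha0, hg0, haqr, hrel⟩
      rw [hhalf] at haqr
      rcases hrel with ⟨had, hgd⟩ | ⟨s, t, hst, has, hgt⟩
      · left
        obtain ⟨t, ht, hgt⟩ := aux_exists p hp2 hpd hg0 hgd
        refine ⟨by simp [hB, had], ?_⟩
        rw [hC, Finset.mem_biUnion]
        exact ⟨t, Finset.mem_range.mpr ht, by simp [hA, hgt]⟩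
      · right
        have htr : t < r := by
          by_contra hcon
          push_neg at hcon
          have h1 : g ^ (2 ^ r * d) = 1 := by rw [← hpd]; exact ZMod.pow_card_sub_one_eq_one hg0
          rw [hcol g r t hcon h1] at hgt
          exact hne hgt.symm
        have hsr : s < r - 1 := by
          by_contra hcon
          push_neg at hcon
          have h1 : a ^ (2 ^ s * d) = 1 := hcol a (r - 1) s hcon haqr
          rw [has] at h1
          exact hne h1
        refine ⟨s, hsr, ?_, ?_⟩
        · simp [hA, has]
        · rw [hD, Finset.mem_biUnion]
          exact ⟨t, Finset.mem_Ico.mpr ⟨by omega, htr⟩, by simp [hA, hgt]⟩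
    · rintro (⟨haB, hgC⟩ | ⟨s, hs, haA, hgD⟩)
      · have had : a ^ d = 1 := by
          simpa [hB] using haB
        rw [hC, Finset.mem_biUnion] at hgC
        obtain ⟨t, ht, hgt⟩ := hgC
        have hgt' : g ^ (2 ^ t * d) = -1 := by simpa [hA] using hgt
        refine ⟨?_, hAne0 t g hgt, ?_, Or.inl ⟨had, hAdne t g hgt⟩⟩
        · intro h0
          rw [h0, zero_pow (by omega)] at had
          exact zero_ne_one had
        · rw [hhalf, pow_mul' a (2 ^ (r - 1)) d, had, one_pow]
      · have has : a ^ (2 ^ s * d) = -1 := by simpa [hA] using haA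
        rw [hD, Finset.mem_biUnion] at hgD
        obtain ⟨t, ht, hgt⟩ := hgD
        have hgt' : g ^ (2 ^ t * d) = -1 := by simpa [hA] using hgt
        rw [Finset.mem_Ico] at ht
        refine ⟨hAne0 s a haA, hAne0 t g hgt, ?_, Or.inr ⟨s, t, by omega, has, hgt'⟩⟩
        rw [hhalf, hstep a s (r - 1) (by omega) has, hone (r - 1 - s) (by omega)]
  -- disjointness
  have hdisj1 : Disjoint (B ×ˢ C)
      ((Finset.range (r - 1)).biUnion (fun s => A s ×ˢ D s)) := by
    rw [Finset.disjoint_left]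
    rintro ⟨a, g⟩ hm hm2
    rw [Finset.mem_product] at hm
    rw [Finset.mem_biUnion] at hm2
    obtain ⟨s, hs, hm2⟩ := hm2
    rw [Finset.mem_product] at hm2
    exact hBA a hm.1 s hm2.1
  have hdisj2 : ∀ s ∈ Finset.range (r - 1), ∀ t ∈ Finset.range (r - 1), s ≠ t →
      Disjoint ((fun s => A s ×ˢ D s) s) ((fun s => A s ×ˢ D s) t) := by
    intro s hs t ht hst
    rw [Finset.disjoint_left]
    rintro ⟨a, g⟩ hm hm2
    rw [Finset.mem_product] at hm hm2
    exact Finset.disjoint_left.mp (hdisjA s t hst) hm.1 hm2.1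
  have hcardS : (Finset.univ.filter P).card =
      d * (∑ t ∈ Finset.range r, 2 ^ t * d) +
        ∑ s ∈ Finset.range (r - 1), 2 ^ s * d * ∑ t ∈ Finset.Ico (s + 1) r, 2 ^ t * d := by
    rw [hSeq, Finset.card_union_of_disjoint hdisj1, Finset.card_biUnion hdisj2]
    congr 1
    · rw [Finset.card_product, hcardB, hcardC]
    · refine Finset.sum_congr rfl fun s hs => ?_
      rw [Finset.card_product, hcardA s (by simp at hs; omega), hcardD s]
  -- the integer identity
  have h41 : 1 ≤ 4 ^ r := Nat.one_le_pow _ _ (by norm_num)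
  have h3 : 3 * (Finset.univ.filter P).card = d ^ 2 * (4 ^ r - 1) := by
    have hkey := key_sumZ (r - 1)
    rw [show r - 1 + 1 = r by omega] at hkey
    zify [h41]
    rw [hcardS]
    push_cast
    rw [← Finset.sum_mul]
    have hin : ∀ s ∈ Finset.range (r - 1),
        (2 : ℤ) ^ s * (d : ℤ) * ∑ t ∈ Finset.Ico (s + 1) r, (2 : ℤ) ^ t * (d : ℤ)
        = ((2 : ℤ) ^ s * ∑ t ∈ Finset.Ico (s + 1) r, (2 : ℤ) ^ t) * ((d : ℤ) * d) := by
      intro s hs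
      rw [← Finset.sum_mul]
      ring
    rw [Finset.sum_congr rfl hin, ← Finset.sum_mul]
    linear_combination (d : ℤ) ^ 2 * hkey
  constructor
  · rw [hNat]
    omega
  · rw [hNat]
    have hcardQ : ((Finset.univ.filter P).card : ℚ) = (d : ℚ) ^ 2 * (4 ^ r - 1) / 3 := by
      have := h3
      have hq : (3 : ℚ) * ((Finset.univ.filter P).card : ℚ)
          = (d : ℚ) ^ 2 * ((4 : ℚ) ^ r - 1) := by
        exact_mod_cast congrArg (fun n : ℕ => (n : ℚ)) h3
      linarith
    have hp1 : ((p : ℚ) - 1) = 2 ^ r * d := by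
      have h2 : (1 : ℕ) ≤ p := hp.two_le.trans' (by norm_num)
      have he : (p : ℚ) - 1 = ((p - 1 : ℕ) : ℚ) := by
        rw [Nat.cast_sub h2]
        norm_num
      rw [he, hpd]
      push_cast
      ring
    rw [hcardQ, hp1]
    have hd0' : (d : ℚ) ≠ 0 := Nat.cast_ne_zero.mpr (by omega)
    have h2r : (2 : ℚ) ^ r ≠ 0 := by positivity
    have h4eq : (4 : ℚ) ^ r = 2 ^ (2 * r) := by
      rw [show (4 : ℚ) = 2 ^ 2 by norm_num, ← pow_mul]
    rw [h4eq]
    have h22r : (2 : ℚ) ^ (2 * r) ≠ 0 := by positivity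
    field_simp
    ring
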